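/- Let p1, p, pj be three points in ℝ² with x(p1) < x(p) < x(pj) and y(p) < y(pj), appearing in clockwise (right-turn) order as p1 → p → pj (i.e., on an upper convex hull). Then the angle ∠p1 p pj is at least 90°, and hence if |p1 pj| ≤ 1 then |p pj| ≤ 1. -/

import Mathlib

open EuclideanGeometry RealInnerProductSpace

/-- Cross product of two planar vectors. -/
def cross (u v : EuclideanSpace ℝ (Fin 2)) : ℝ := u 0 * v 1 - u 1 * v 0

theorem stmt_3 (p1 p pj : EuclideanSpace ℝ (Fin 2))
    (hx1 : p1 0 < p 0) (hx2 : p 0 < pj 0) (hy : p 1 < pj 1)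
    (hcw : cross (p - p1) (pj - p1) < 0) :
    Real.pi / 2 ≤ ∠ p1 p pj ∧ (dist p1 pj ≤ 1 → dist p pj ≤ 1) := by
  have hc : (p 0 - p1 0) * (pj 1 - p1 1) - (p 1 - p1 1) * (pj 0 - p1 0) < 0 := by
    simpa [cross] using hcw
  have hinner : (inner ℝ (p1 - p) (pj - p) : ℝ) ≤ 0 := by
    have : (inner ℝ (p1 - p) (pj - p) : ℝ) = (p1 0 - p 0) * (pj 0 - p 0) + (p1 1 - p 1) * (pj 1 - p 1) := by
      simp [PiLp.inner_apply, Fin.sum_univ_two, mul_comm]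
    rw [this]
    nlinarith [mul_neg_of_neg_of_pos hc (sub_pos.2 hy), sub_pos.2 hx1, sub_pos.2 hx2,
      sub_pos.2 hy, sq_nonneg (pj 1 - p 1), sq_nonneg (pj 0 - p 0),
      mul_pos (sub_pos.2 hx1) (sub_pos.2 hx2)]
  constructor
  · rw [EuclideanGeometry.angle, InnerProductGeometry.angle,
      Real.arccos_eq_pi_div_two_sub_arcsin]
    simp only [vsub_eq_sub]
    have : Real.arcsin ((inner ℝ (p1 - p) (pj - p) : ℝ) / (‖p1 - p‖ * ‖pj - p‖)) ≤ 0 := by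
      apply Real.arcsin_nonpos.2
      apply div_nonpos_of_nonpos_of_nonneg hinner
      positivity
    linarith
  · intro h
    have e : (p1 - pj : EuclideanSpace ℝ (Fin 2)) = (p1 - p) - (pj - p) := by abel
    have h2 : ‖(p1 - pj : EuclideanSpace ℝ (Fin 2))‖ ^ 2
        = ‖p1 - p‖ ^ 2 - 2 * (inner ℝ (p1 - p) (pj - p) : ℝ) + ‖pj - p‖ ^ 2 := by
      rw [e, @norm_sub_sq_real]
    have hsq : ‖(pj - p : EuclideanSpace ℝ (Fin 2))‖ ^ 2 ≤ ‖(p1 - pj : EuclideanSpace ℝ (Fin 2))‖ ^ 2 := by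
      nlinarith [sq_nonneg ‖(p1 - p : EuclideanSpace ℝ (Fin 2))‖]
    have key : dist p pj ≤ dist p1 pj := by
      rw [dist_eq_norm, dist_eq_norm, ← norm_neg (p - pj)]
      have : -(p - pj) = (pj - p : EuclideanSpace ℝ (Fin 2)) := by abel
      rw [this]
      nlinarith [norm_nonneg (pj - p : EuclideanSpace ℝ (Fin 2)), norm_nonneg (p1 - pj : EuclideanSpace ℝ (Fin 2))]
    linarith
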